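/- Sharpness of the Gaussian smoothing certificate in one dimension: for d = 1, the classifier f(z) = sign of (z ≤ t threshold), i.e., f(z) = 1 if z ≤ t and 0 otherwise, achieves equality in the Cohen bound: if p = P_{η ~ N(0,σ²)}[x + η ≤ t] = Φ((t−x)/σ) > 1/2, then for δ = σ·Φ⁻¹(p) exactly, P[x + δ + η ≤ t] = 1/2, so the certified radius σ·Φ⁻¹(p) cannot be improved for general classifiers. -/

import Mathlib

open MeasureTheory ProbabilityTheory

noncomputable def stdGaussian (d : ℕ) (σ : ℝ) : Measure (EuclideanSpace ℝ (Fin d)) :=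
  Measure.map (MeasurableEquiv.toLp 2 (Fin d → ℝ))
    (Measure.pi (fun _ : Fin d => gaussianReal 0 (Real.toNNReal (σ ^ 2))))

noncomputable def Phi : ℝ → ℝ := fun x => ProbabilityTheory.cdf (gaussianReal 0 1) x

lemma gauss_measure_eq (σ a t : ℝ) (hσ : 0 < σ) :
    ((gaussianReal 0 (Real.toNNReal (σ ^ 2))) {η | a + η ≤ t}).toReal
      = Phi ((t - a) / σ) := by
  have hset : {η : ℝ | a + η ≤ t} = Set.Iic (t - a) := by
    ext η; simp [Set.mem_Iic]; constructor <;> intro h <;> linarith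
  have hmap : (gaussianReal 0 1).map (σ * ·) = gaussianReal 0 (Real.toNNReal (σ ^ 2)) := by
    rw [ProbabilityTheory.gaussianReal_map_const_mul σ]
    congr 1
    · simp
    · ext; simp [Real.toNNReal, max_eq_left (sq_nonneg σ)]
  rw [hset, ← hmap, Measure.map_apply (by fun_prop) measurableSet_Iic]
  have hpre : (σ * ·) ⁻¹' Set.Iic (t - a) = Set.Iic ((t - a) / σ) := by
    ext ξ; simp [Set.mem_Iic, le_div_iff₀ hσ, mul_comm]
  rw [hpre, Phi, ProbabilityTheory.cdf_eq_real, measureReal_def]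

lemma phi_strictMono : StrictMono Phi := by
  intro a b hab
  have h1 : (gaussianReal 0 1) (Set.Iic a) < (gaussianReal 0 1) (Set.Iic b) := by
    have hpos : 0 < (gaussianReal 0 1) (Set.Ioc a b) := by
      rw [pos_iff_ne_zero]
      intro h
      have hac := ProbabilityTheory.gaussianReal_absolutelyContinuous' (μ := 0) (v := 1)
        one_ne_zero
      have := hac h
      rw [Real.volume_Ioc] at this
      simp [ENNReal.ofReal_eq_zero, hab] at this
      linarith
    have hunion : Set.Iic a ∪ Set.Ioc a b = Set.Iic b := Set.Iic_union_Ioc_eq_Iic hab.le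
    calc (gaussianReal 0 1) (Set.Iic a)
        < (gaussianReal 0 1) (Set.Iic a) + (gaussianReal 0 1) (Set.Ioc a b) := by
          exact ENNReal.lt_add_right (measure_ne_top _ _) hpos.ne'
      _ = (gaussianReal 0 1) (Set.Iic b) := by
          rw [← hunion, measure_union (by
            rw [Set.disjoint_left]; intro x hx hx2; exact absurd hx2.1 (not_lt.mpr hx))
            measurableSet_Ioc]
  simp only [Phi, ProbabilityTheory.cdf_eq_real, measureReal_def]
  exact ENNReal.toReal_lt_toReal (measure_ne_top _ _) (measure_ne_top _ _) |>.mpr h1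

lemma phi_zero : Phi 0 = 1 / 2 := by
  have hmap : (gaussianReal 0 1).map ((-1 : ℝ) * ·) = gaussianReal 0 1 := by
    rw [ProbabilityTheory.gaussianReal_map_const_mul (-1 : ℝ)]
    congr 1
    · simp
    · ext; norm_num
  have hIci : (gaussianReal 0 1) (Set.Ici 0) = (gaussianReal 0 1) (Set.Iic 0) := by
    conv_rhs => rw [← hmap]
    rw [Measure.map_apply (by fun_prop) measurableSet_Iic]
    congr 1
    ext ξ; simp
  have hzero : (gaussianReal 0 1) ({0} : Set ℝ) = 0 := by
    apply ProbabilityTheory.gaussianReal_absolutelyContinuous 0 one_ne_zero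
    simp
  have hsplit : (gaussianReal 0 1) (Set.Iic 0) + (gaussianReal 0 1) (Set.Ici 0)
      = 1 + (gaussianReal 0 1) ({0} : Set ℝ) := by
    rw [← measure_union_add_inter (Set.Iic 0) measurableSet_Ici]
    simp [Set.Iic_union_Ici, Set.Iic_inter_Ici]
  rw [hIci, hzero, add_zero] at hsplit
  have h2 : (2 : ENNReal) * (gaussianReal 0 1) (Set.Iic 0) = 1 := by
    rw [two_mul]; exact hsplit
  have : (gaussianReal 0 1) (Set.Iic 0) = 1 / 2 := by
    rw [ENNReal.eq_div_iff two_ne_zero ENNReal.ofNat_ne_top, mul_comm]; rw [mul_comm]; exact h2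
  rw [Phi, ProbabilityTheory.cdf_eq_real, measureReal_def, this]
  simp [ENNReal.toReal_div]

noncomputable def PhiInv : ℝ → ℝ := Function.invFun Phi

/-- Sharpness of the Gaussian smoothing certificate in one dimension: for the threshold
classifier `f z = (z ≤ t)`, if `p = P[x + η ≤ t] > 1/2` with `η ~ N(0, σ²)`, then
`p = Φ((t − x)/σ)` and at the perturbation `δ = σ·Φ⁻¹(p)` exactly,
`P[x + δ + η ≤ t] = 1/2`. -/
theorem stmt16 (σ x t : ℝ) (hσ : 0 < σ) (p : ℝ)
    (hp : p = ((gaussianReal 0 (Real.toNNReal (σ ^ 2))) {η | x + η ≤ t}).toReal)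
    (hp2 : 1 / 2 < p) :
    p = Phi ((t - x) / σ) ∧
    ((gaussianReal 0 (Real.toNNReal (σ ^ 2)))
        {η | x + σ * PhiInv p + η ≤ t}).toReal = 1 / 2 := by
  have h1 : p = Phi ((t - x) / σ) := by rw [hp, gauss_measure_eq σ x t hσ]
  have hrange : Phi (PhiInv p) = p := Function.invFun_eq ⟨(t - x) / σ, h1.symm⟩
  have hc : PhiInv p = (t - x) / σ := phi_strictMono.injective (by rw [hrange, h1])
  refine ⟨h1, ?_⟩
  rw [gauss_measure_eq σ (x + σ * PhiInv p) t hσ, hc]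
  have h0 : (t - (x + σ * ((t - x) / σ))) / σ = 0 := by field_simp; ring
  rw [h0, phi_zero]
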